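/- If the grid G_t used for the dynamic program at stage t contains every storage state reachable at the beginning of stage t (under integer-multiple-of-u trades and efficiencies η±), then the piecewise-linear interpolated value functions Ṽ_t agree with the exact value functions V_t at all states visited by the dynamic program, and the DP solution attains the same optimal value as the exact mixed-integer formulation. -/

import Mathlib

/-- Storage transition of the DP rolling intrinsic: `S(s, f) = s + ηp·f` if `f > 0`
(charging) and `s + f/ηm` otherwise (discharging). -/
noncomputable def socTrans (ηp ηm : ℝ) (s f : ℝ) : ℝ :=
  if 0 < f then s + ηp * f else s + f / ηm

/-- Exact backward value functions: `Vexact X π ηp ηm u n t s` is the value at stage `t`,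
state `s`, with `n` stages to go; actions are integers `k` (trades `k·u`). -/
noncomputable def Vexact (X : ℕ → ℝ → Finset ℤ) (π : ℕ → ℤ → ℝ)
    (ηp ηm u : ℝ) : ℕ → ℕ → ℝ → ℝ
  | 0, _, _ => 0
  | n + 1, t, s =>
      sSup ((fun k : ℤ => π t k +
        Vexact X π ηp ηm u n (t + 1) (socTrans ηp ηm s ((k : ℝ) * u))) '' (X t s : Set ℤ))

/-- Approximate backward value functions: at each stage the stage value is replaced by
its interpolation `I (G t) ·` on the finite grid `G t`. -/
noncomputable def Vapprox (I : Finset ℝ → (ℝ → ℝ) → (ℝ → ℝ)) (G : ℕ → Finset ℝ)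
    (X : ℕ → ℝ → Finset ℤ) (π : ℕ → ℤ → ℝ) (ηp ηm u : ℝ) : ℕ → ℕ → ℝ → ℝ
  | 0, _, _ => 0
  | n + 1, t, s =>
      I (G t)
        (fun x => sSup ((fun k : ℤ => π t k +
          Vapprox I G X π ηp ηm u n (t + 1) (socTrans ηp ηm x ((k : ℝ) * u))) ''
            (X t x : Set ℤ))) s

/-- The state trajectory induced by an integer action sequence. -/
noncomputable def socTraj (ηp ηm u : ℝ) (s0 : ℝ) (t0 : ℕ) (a : ℕ → ℤ) : ℕ → ℝ
  | 0 => s0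
  | n + 1 => socTrans ηp ηm (socTraj ηp ηm u s0 t0 a n) ((a (t0 + n) : ℝ) * u)

/-- The trajectory only depends on the actions actually used. -/
lemma socTraj_congr (ηp ηm u : ℝ) (s0 : ℝ) (t0 : ℕ) (a b : ℕ → ℤ) :
    ∀ m, (∀ j, j < m → a (t0 + j) = b (t0 + j)) →
      socTraj ηp ηm u s0 t0 a m = socTraj ηp ηm u s0 t0 b m := by
  intro m
  induction m with
  | zero => intro _; rfl
  | succ m ih =>
      intro h
      simp only [socTraj, ih (fun j hj => h j (Nat.lt_succ_of_lt hj)),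
        h m (Nat.lt_succ_self m)]

/-- Shift lemma for trajectories. -/
lemma socTraj_shift (ηp ηm u : ℝ) (s0 : ℝ) (t0 : ℕ) (a : ℕ → ℤ) :
    ∀ m, socTraj ηp ηm u s0 t0 a (m + 1) =
      socTraj ηp ηm u (socTrans ηp ηm s0 ((a t0 : ℝ) * u)) (t0 + 1) a m := by
  intro m
  induction m with
  | zero => simp [socTraj]
  | succ m ih =>
      show socTrans ηp ηm (socTraj ηp ηm u s0 t0 a (m + 1)) ((a (t0 + (m + 1)) : ℝ) * u) = _
      rw [ih]
      have : t0 + (m + 1) = (t0 + 1) + m := by omega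
      rw [this]
      rfl

/-- The exact value function is the optimal value of the monolithic problem. -/
lemma Vexact_isGreatest (X : ℕ → ℝ → Finset ℤ) (π : ℕ → ℤ → ℝ) (ηp ηm u : ℝ)
    (hX : ∀ t s, (X t s).Nonempty) :
    ∀ n t0 s0, IsGreatest
      {r : ℝ | ∃ a : ℕ → ℤ,
        (∀ m, m < n → a (t0 + m) ∈ X (t0 + m) (socTraj ηp ηm u s0 t0 a m)) ∧
        r = ∑ m ∈ Finset.range n, π (t0 + m) (a (t0 + m))}
      (Vexact X π ηp ηm u n t0 s0) := by
  intro n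
  induction n with
  | zero =>
      intro t0 s0
      constructor
      · exact ⟨fun _ => 0, fun m hm => absurd hm (Nat.not_lt_zero m), by simp [Vexact]⟩
      · rintro r ⟨a, -, hr⟩
        simp [Vexact, hr]
  | succ n ih =>
      intro t0 s0
      set S : Set ℝ := (fun k : ℤ => π t0 k +
        Vexact X π ηp ηm u n (t0 + 1) (socTrans ηp ηm s0 ((k : ℝ) * u))) '' (X t0 s0 : Set ℤ)
        with hS
      have hfin : S.Finite := (X t0 s0).finite_toSet.image _
      have hne : S.Nonempty := (Set.image_nonempty).2 (by exact_mod_cast hX t0 s0)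
      have hV : Vexact X π ηp ηm u (n + 1) t0 s0 = sSup S := rfl
      constructor
      · -- membership: sSup is attained
        have hmem : sSup S ∈ S := hne.csSup_mem hfin
        obtain ⟨k, hk, hkval⟩ := hmem
        set s1 := socTrans ηp ηm s0 ((k : ℝ) * u) with hs1
        obtain ⟨a, ha, haval⟩ := (ih (t0 + 1) s1).1
        refine ⟨fun m => if m = t0 then k else a m, ?_, ?_⟩
        · intro m hm
          cases m with
          | zero =>
              simpa [socTraj] using hk
          | succ m =>
              have hne' : t0 + (m + 1) ≠ t0 := by omega
              have h1 : socTraj ηp ηm u s0 t0 (fun m => if m = t0 then k else a m) (m + 1)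
                  = socTraj ηp ηm u s1 (t0 + 1) a m := by
                rw [socTraj_shift]
                simp only [if_pos rfl]
                exact socTraj_congr _ _ _ _ _ _ _ m (fun j _ => by
                  simp only [if_neg (show t0 + 1 + j ≠ t0 by omega)])
              rw [h1]
              simp only [if_neg hne']
              have := ha m (by omega)
              have h2 : t0 + 1 + m = t0 + (m + 1) := by omega
              rwa [h2] at this
        · have hkval' : π t0 k + Vexact X π ηp ηm u n (t0 + 1) s1 = sSup S := hkval
          rw [hV, ← hkval', Finset.sum_range_succ']
          simp only [Nat.add_zero, if_pos rfl]
          rw [add_comm]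
          congr 1
          rw [haval]
          refine Finset.sum_congr rfl (fun m _ => ?_)
          have hne' : t0 + (m + 1) ≠ t0 := by omega
          have h2 : t0 + (m + 1) = t0 + 1 + m := by omega
          simp only [h2, if_neg (show t0 + 1 + m ≠ t0 by omega)]
      · -- upper bound
        rintro r ⟨a, ha, hr⟩
        set s1 := socTrans ηp ηm s0 ((a t0 : ℝ) * u) with hs1
        have hk0 : a t0 ∈ X t0 s0 := by simpa [socTraj] using ha 0 (Nat.succ_pos n)
        have hr' : (∑ m ∈ Finset.range n, π (t0 + 1 + m) (a (t0 + 1 + m)))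
            ≤ Vexact X π ηp ηm u n (t0 + 1) s1 := by
          refine (ih (t0 + 1) s1).2 ⟨a, ?_, rfl⟩
          intro m hm
          have h1 : socTraj ηp ηm u s1 (t0 + 1) a m = socTraj ηp ηm u s0 t0 a (m + 1) :=
            (socTraj_shift ηp ηm u s0 t0 a m).symm
          rw [h1]
          have := ha (m + 1) (by omega)
          have h2 : t0 + (m + 1) = t0 + 1 + m := by omega
          rwa [h2] at this
        have hmemS : π t0 (a t0) + Vexact X π ηp ηm u n (t0 + 1) s1 ∈ S :=
          ⟨a t0, by exact_mod_cast hk0, rfl⟩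
        have hle : π t0 (a t0) + Vexact X π ηp ηm u n (t0 + 1) s1 ≤ sSup S :=
          le_csSup hfin.bddAbove hmemS
        rw [hV, hr, Finset.sum_range_succ']
        simp only [Nat.add_zero]
        calc (∑ m ∈ Finset.range n, π (t0 + (m + 1)) (a (t0 + (m + 1)))) + π t0 (a t0)
            = π t0 (a t0) + ∑ m ∈ Finset.range n, π (t0 + 1 + m) (a (t0 + 1 + m)) := by
              rw [add_comm]
              congr 1
              refine Finset.sum_congr rfl (fun m _ => ?_)
              have h2 : t0 + (m + 1) = t0 + 1 + m := by omega
              rw [h2]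
          _ ≤ π t0 (a t0) + Vexact X π ηp ηm u n (t0 + 1) s1 := by
              exact add_le_add_right hr' _
          _ ≤ sSup S := hle

/-- If the interpolation operator reproduces function values at grid points,
the reachable sets are closed under the transitions, and for every stage `t` the grid
`G t` contains all storage states reachable at stage `t`, then the interpolated value
functions agree with the exact value functions at all states visited by the DP, and
(for nonempty action sets) the DP solution attains the same optimal value as the exact
(mixed-integer) monolithic formulation. -/
theorem dp_exact_on_reachable_grid
    (I : Finset ℝ → (ℝ → ℝ) → (ℝ → ℝ)) (G : ℕ → Finset ℝ)
    (X : ℕ → ℝ → Finset ℤ) (π : ℕ → ℤ → ℝ) (ηp ηm u : ℝ)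
    (Reach : ℕ → Set ℝ)
    (hI : ∀ (g : Finset ℝ) (f : ℝ → ℝ) (s : ℝ), s ∈ g → I g f s = f s)
    (hclosed : ∀ t, ∀ s ∈ Reach t, ∀ k ∈ X t s,
      socTrans ηp ηm s ((k : ℝ) * u) ∈ Reach (t + 1))
    (hgrid : ∀ t, Reach t ⊆ (G t : Set ℝ)) :
    (∀ n t, ∀ s ∈ Reach t,
        Vapprox I G X π ηp ηm u n t s = Vexact X π ηp ηm u n t s) ∧
    (∀ (T t0 : ℕ) (s0 : ℝ), t0 ≤ T → s0 ∈ Reach t0 →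
      (∀ t s, (X t s).Nonempty) →
      IsGreatest
        {r : ℝ | ∃ a : ℕ → ℤ,
          (∀ n, n < T + 1 - t0 → a (t0 + n) ∈ X (t0 + n) (socTraj ηp ηm u s0 t0 a n)) ∧
          r = ∑ n ∈ Finset.range (T + 1 - t0), π (t0 + n) (a (t0 + n))}
        (Vapprox I G X π ηp ηm u (T + 1 - t0) t0 s0)) := by
  have key : ∀ n t, ∀ s ∈ Reach t,
      Vapprox I G X π ηp ηm u n t s = Vexact X π ηp ηm u n t s := by
    intro n
    induction n with
    | zero => intro t s _; rfl
    | succ n ih =>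
        intro t s hs
        show I (G t) _ s = _
        rw [hI _ _ s (hgrid t hs)]
        show sSup _ = sSup _
        congr 1
        refine Set.image_congr (fun k hk => ?_)
        congr 1
        exact ih (t + 1) _ (hclosed t s hs k hk)
  refine ⟨key, ?_⟩
  intro T t0 s0 _ hs0 hX
  rw [key _ t0 s0 hs0]
  exact Vexact_isGreatest X π ηp ηm u hX (T + 1 - t0) t0 s0
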